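/- Let b, x, y, z be positive integers with (x + y + z)² = b·x·y·z, and suppose x divides y and x divides z (as holds for every solution in the family generated by Vieta jumping from a Vieta-reduced solution). Define u₁ := (y, (y+z)/x), u₂ := (−x, −1), u₃ := (0, −1), and T := {a ∈ ℝ² : ⟨u₁,a⟩ ≤ 1, ⟨u₂,a⟩ ≤ 1, ⟨u₃,a⟩ ≤ 1}. Then T is a pseudointegral triangle whose only interior lattice point is the origin and whose boundary contains exactly b lattice points. -/

import Mathlib

open Set Pointwise

/-- The set of lattice points of the plane. -/
def latticePts : Set (ℝ × ℝ) := {p | ∃ m n : ℤ, p = ((m : ℝ), (n : ℝ))}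

/-- The coercion of a rational point of the plane to a real point. -/
def qpt (v : ℚ × ℚ) : ℝ × ℝ := ((v.1 : ℝ), (v.2 : ℝ))

/-- The Ehrhart function of a set `P ⊆ ℝ²`:  `t ↦ #(tP ∩ ℤ²)`. -/
noncomputable def ehr (P : Set (ℝ × ℝ)) (t : ℕ) : ℕ :=
  (((t : ℝ) • P) ∩ latticePts).ncard

/-- A set `P ⊆ ℝ²` is pseudointegral (a PIP) if its Ehrhart function agrees with
a polynomial at all positive integers. -/
def IsPIP (P : Set (ℝ × ℝ)) : Prop :=
  ∃ c : Polynomial ℚ, ∀ t : ℕ, 0 < t → (ehr P t : ℚ) = c.eval (t : ℚ)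

/-- A rational triangle: the convex hull of three non-collinear rational points. -/
def IsRatTriangle (T : Set (ℝ × ℝ)) : Prop :=
  ∃ p q r : ℚ × ℚ, ¬ Collinear ℝ ({qpt p, qpt q, qpt r} : Set (ℝ × ℝ)) ∧
    T = convexHull ℝ {qpt p, qpt q, qpt r}

/-- The standard inner product on ℝ². -/
def dotR (u a : ℝ × ℝ) : ℝ := u.1 * a.1 + u.2 * a.2



set_option maxHeartbeats 1000000

namespace Stmt18

def Dset (x p q N : ℤ) : Set (ℤ × ℤ) :=
  {ad | 0 ≤ ad.1 ∧ 0 ≤ ad.2 ∧ p * ad.1 + q * ad.2 ≤ N ∧ x ∣ ad.1 - ad.2}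

def Bdry (x p q N : ℤ) : Set (ℤ × ℤ) :=
  {ad | ad ∈ Dset x p q N ∧ (ad.1 = 0 ∨ ad.2 = 0 ∨ p * ad.1 + q * ad.2 = N)}

lemma ncard_Icc_int (a b : ℤ) : (Set.Icc a b).ncard = (b + 1 - a).toNat := by
  rw [← Finset.coe_Icc, Set.ncard_coe_finset, Int.card_Icc]

lemma Dset_finite {x p q N : ℤ} (hp : 0 < p) (hq : 0 < q) : (Dset x p q N).Finite := by
  apply Set.Finite.subset ((Set.finite_Icc (0:ℤ) N).prod (Set.finite_Icc (0:ℤ) N))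
  rintro ⟨a, d⟩ ⟨h1, h2, h3, -⟩
  simp only [Set.mem_setOf_eq] at h1 h2 h3
  constructor
  · exact ⟨h1, by nlinarith⟩
  · exact ⟨h2, by nlinarith⟩

lemma Bdry_subset {x p q N : ℤ} : Bdry x p q N ⊆ Dset x p q N := fun _ h => h.1

lemma bdry_card {x p q b σ N M₂ M₃ : ℤ} (hx : 0 < x) (hp : 0 < p) (hq : 0 < q) (hb : 0 < b)
    (heq : (p + q + 1) ^ 2 = b * x * p * q) (hσ : 1 ≤ σ) (hNdef : N = σ * (p + q + 1))
    (hM₂l : x * q * M₂ ≤ N - 1) (hM₂u : N ≤ x * q * (M₂ + 1)) (hM₂0 : 0 ≤ M₂)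
    (hM₃l : x * p * M₃ ≤ N - 1) (hM₃u : N ≤ x * p * (M₃ + 1)) (hM₃0 : 0 ≤ M₃) :
    ((Bdry x p q N).ncard : ℤ) = b * σ := by
  have hNpos : 1 ≤ N := by nlinarith
  have hxq : 0 < x * q := mul_pos hx hq
  have hxp : 0 < x * p := mul_pos hx hp
  have hbσ : 0 < b * σ := mul_pos hb (by linarith)
  have hM23 : M₂ + M₃ + 1 ≤ b * σ := by
    have k2 : (p + q + 1) * M₂ + 1 ≤ b * σ * p := by
      have h2 : (p + q + 1) * N = (x * q) * (b * σ * p) := by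
        rw [hNdef]; linear_combination σ * heq
      have m1 : (p + q + 1) * (x * q * M₂) ≤ (p + q + 1) * (N - 1) :=
        mul_le_mul_of_nonneg_left hM₂l (by linarith)
      have m2 : (p + q + 1) * (x * q * M₂) = (x * q) * ((p + q + 1) * M₂) := by ring
      have m3 : (p + q + 1) * (N - 1) = (x * q) * (b * σ * p) - (p + q + 1) := by
        linear_combination h2
      have h3 : (x * q) * ((p + q + 1) * M₂) < (x * q) * (b * σ * p) := by linarith
      have := lt_of_mul_lt_mul_left h3 (le_of_lt hxq)
      linarith
    have k3 : (p + q + 1) * M₃ + 1 ≤ b * σ * q := by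
      have h2 : (p + q + 1) * N = (x * p) * (b * σ * q) := by
        rw [hNdef]; linear_combination σ * heq
      have m1 : (p + q + 1) * (x * p * M₃) ≤ (p + q + 1) * (N - 1) :=
        mul_le_mul_of_nonneg_left hM₃l (by linarith)
      have m2 : (p + q + 1) * (x * p * M₃) = (x * p) * ((p + q + 1) * M₃) := by ring
      have m3 : (p + q + 1) * (N - 1) = (x * p) * (b * σ * q) - (p + q + 1) := by
        linear_combination h2
      have h3 : (x * p) * ((p + q + 1) * M₃) < (x * p) * (b * σ * q) := by linarith
      have := lt_of_mul_lt_mul_left h3 (le_of_lt hxp)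
      linarith
    have r1 : (p + q + 1) * (M₂ + M₃) = (p + q + 1) * M₂ + (p + q + 1) * M₃ := by ring
    have r2 : b * σ * p + b * σ * q + b * σ = (p + q + 1) * (b * σ) := by ring
    have h6 : (p + q + 1) * (M₂ + M₃) < (p + q + 1) * (b * σ) := by linarith
    have := lt_of_mul_lt_mul_left h6 (by linarith : (0:ℤ) ≤ p + q + 1)
    linarith
  set P2 : Set (ℤ × ℤ) := (fun e : ℤ => ((0 : ℤ), x * e)) '' Set.Icc 0 M₂ with hP2
  set P3 : Set (ℤ × ℤ) := (fun e : ℤ => (x * e, (0 : ℤ))) '' Set.Icc 1 M₃ with hP3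
  set Hyp : Set (ℤ × ℤ) :=
    (fun j : ℤ => (x * q * j - N, b * x * p * σ - N - x * p * j)) ''
      Set.Icc (M₂ + 1) (b * σ - M₃ - 1) with hHyp
  have valP2 : ∀ ad ∈ P2, ad.1 = 0 ∧ p * ad.1 + q * ad.2 ≤ N - 1 ∧ 0 ≤ ad.2 ∧ x ∣ ad.1 - ad.2 := by
    rintro ad ⟨e, he, rfl⟩
    simp only [Set.mem_Icc] at he
    have m1 : x * q * e ≤ x * q * M₂ := mul_le_mul_of_nonneg_left he.2 (le_of_lt hxq)
    refine ⟨rfl, ?_, mul_nonneg (le_of_lt hx) he.1, ⟨-e, by ring⟩⟩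
    show p * 0 + q * (x * e) ≤ N - 1
    have m2 : p * 0 + q * (x * e) = x * q * e := by ring
    linarith
  have valP3 : ∀ ad ∈ P3, ad.2 = 0 ∧ p * ad.1 + q * ad.2 ≤ N - 1 ∧ x ≤ ad.1 ∧ x ∣ ad.1 - ad.2 := by
    rintro ad ⟨e, he, rfl⟩
    simp only [Set.mem_Icc] at he
    have m1 : x * p * e ≤ x * p * M₃ := mul_le_mul_of_nonneg_left he.2 (le_of_lt hxp)
    refine ⟨rfl, ?_, ?_, ⟨e, by ring⟩⟩
    · show p * (x * e) + q * 0 ≤ N - 1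
      have m2 : p * (x * e) + q * 0 = x * p * e := by ring
      linarith
    · show x ≤ x * e
      nlinarith [he.1]
  have valHyp : ∀ ad ∈ Hyp, 0 ≤ ad.1 ∧ 0 ≤ ad.2 ∧ p * ad.1 + q * ad.2 = N ∧ x ∣ ad.1 - ad.2 := by
    rintro ad ⟨j, hj, rfl⟩
    simp only [Set.mem_Icc] at hj
    have h1 : x * q * (M₂ + 1) ≤ x * q * j := mul_le_mul_of_nonneg_left hj.1 (le_of_lt hxq)
    have h2 : x * p * j ≤ x * p * (b * σ - M₃ - 1) := mul_le_mul_of_nonneg_left hj.2 (le_of_lt hxp)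
    have h3 : x * p * (b * σ - M₃ - 1) = b * x * p * σ - x * p * (M₃ + 1) := by ring
    refine ⟨?_, ?_, ?_, ⟨q * j + p * j - b * p * σ, by dsimp only; ring⟩⟩
    · show (0:ℤ) ≤ x * q * j - N
      linarith
    · show (0:ℤ) ≤ b * x * p * σ - N - x * p * j
      linarith
    · show p * (x * q * j - N) + q * (b * x * p * σ - N - x * p * j) = N
      linear_combination -σ * heq - (p + q + 1) * hNdef
  have hsplit : Bdry x p q N = P2 ∪ P3 ∪ Hyp := by
    ext ⟨a, d⟩
    constructor
    · rintro ⟨⟨h0a, h0d, hvle, ⟨k, hk⟩⟩, hor⟩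
      simp only [Set.mem_setOf_eq] at h0a h0d hvle hor hk ⊢
      by_cases hvN : p * a + q * d = N
      · right
        have e1 : x * q * k = (p + q) * a - N := by linear_combination (-q) * hk - hvN
        have e2 : x * p * k = N - (p + q) * d := by linear_combination (-p) * hk + hvN
        set K : ℤ := k + b * σ * p with hK
        set j : ℤ := -(b * p) * (b * x * p * σ - N - d) - (p + q + 2 - b * x * p) * K with hj
        have e3 : x * p * K = (p + q) * (b * x * p * σ - N - d) := by
          rw [hK]; linear_combination e2 + σ * heq + (p + q + 1) * hNdef
        have e4 : x * q * K = (p + q) * (a + N) := by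
          rw [hK]; linear_combination e1 - σ * heq - (p + q + 1) * hNdef
        have hKj : K = (p + q) * j := by
          rw [hj]; linear_combination (-(b * p)) * e3 + K * heq
        have hwpos : (0:ℤ) < p + q := by linarith
        have ha' : a = x * q * j - N := by
          have h5 : (p + q) * (x * q * j) = (p + q) * (a + N) := by
            rw [← e4, hKj]; ring
          have := mul_left_cancel₀ (ne_of_gt hwpos) h5
          linarith
        have hd' : d = b * x * p * σ - N - x * p * j := by
          have h5 : (p + q) * (x * p * j) = (p + q) * (b * x * p * σ - N - d) := by
            rw [← e3, hKj]; ring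
          have := mul_left_cancel₀ (ne_of_gt hwpos) h5
          linarith
        refine ⟨j, Set.mem_Icc.mpr ⟨?_, ?_⟩, ?_⟩
        · have h5 : x * q * M₂ < x * q * j := by linarith
          have := lt_of_mul_lt_mul_left h5 (le_of_lt hxq)
          linarith
        · have r1 : x * p * (b * σ - M₃) = b * x * p * σ - x * p * M₃ := by ring
          have h5 : x * p * j < x * p * (b * σ - M₃) := by linarith
          have := lt_of_mul_lt_mul_left h5 (le_of_lt hxp)
          linarith
        · show (x * q * j - N, b * x * p * σ - N - x * p * j) = (a, d)
          rw [ha', hd']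
      · left
        rcases hor with ha0 | hd0 | hvN'
        · left
          obtain ⟨e, he⟩ : x ∣ d := by
            refine ⟨-k, ?_⟩
            rw [ha0] at hk; linarith
          have he0 : 0 ≤ e := by
            by_contra hcon
            push_neg at hcon
            have : x * e ≤ x * 0 := mul_le_mul_of_nonneg_left (by linarith) (le_of_lt hx)
            simp at this
            nlinarith
          refine ⟨e, Set.mem_Icc.mpr ⟨he0, ?_⟩, ?_⟩
          · have h5 : q * d ≤ N - 1 := by
              rcases lt_or_ge (p * a + q * d) N with h | h
              · rw [ha0] at h; linarith [h]
              · exact absurd (le_antisymm hvle h) hvN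
            have r1 : q * d = x * q * e := by rw [he]; ring
            have h6 : x * q * e < x * q * (M₂ + 1) := by linarith
            have := lt_of_mul_lt_mul_left h6 (le_of_lt hxq)
            linarith
          · show ((0:ℤ), x * e) = (a, d)
            rw [ha0, ← he]
        · by_cases ha0 : a = 0
          · left
            refine ⟨0, Set.mem_Icc.mpr ⟨le_refl _, hM₂0⟩, ?_⟩
            show ((0:ℤ), x * 0) = (a, d)
            rw [ha0, hd0]; norm_num
          · right
            obtain ⟨e, he⟩ : x ∣ a := ⟨k, by rw [hd0] at hk; linarith⟩
            have he1 : 1 ≤ e := by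
              by_contra hcon
              push_neg at hcon
              have : x * e ≤ x * 0 := mul_le_mul_of_nonneg_left (by linarith) (le_of_lt hx)
              simp at this
              have ha1 : 0 < a := lt_of_le_of_ne h0a (Ne.symm ha0)
              nlinarith
            refine ⟨e, Set.mem_Icc.mpr ⟨he1, ?_⟩, ?_⟩
            · have h5 : p * a ≤ N - 1 := by
                rcases lt_or_ge (p * a + q * d) N with h | h
                · rw [hd0] at h; linarith [h]
                · exact absurd (le_antisymm hvle h) hvN
              have r1 : p * a = x * p * e := by rw [he]; ring
              have h6 : x * p * e < x * p * (M₃ + 1) := by linarith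
              have := lt_of_mul_lt_mul_left h6 (le_of_lt hxp)
              linarith
            · show (x * e, (0:ℤ)) = (a, d)
              rw [hd0, ← he]
        · exact absurd hvN' hvN
    · rintro ((hmem | hmem) | hmem)
      · obtain ⟨h1, h2, h3, h4⟩ := valP2 _ hmem
        exact ⟨⟨le_of_eq h1.symm, h3, by linarith, h4⟩, Or.inl h1⟩
      · obtain ⟨h1, h2, h3, h4⟩ := valP3 _ hmem
        exact ⟨⟨by linarith, le_of_eq h1.symm, by linarith, h4⟩, Or.inr (Or.inl h1)⟩
      · obtain ⟨h1, h2, h3, h4⟩ := valHyp _ hmem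
        exact ⟨⟨h1, h2, le_of_eq h3, h4⟩, Or.inr (Or.inr h3)⟩
  -- disjointness
  have d23 : Disjoint P2 P3 := by
    rw [Set.disjoint_left]
    intro ad h2 h3
    have v2 := (valP2 _ h2).1
    have v3 := (valP3 _ h3).2.2.1
    linarith
  have d23H : Disjoint (P2 ∪ P3) Hyp := by
    rw [Set.disjoint_left]
    intro ad h23 hH
    have vH := (valHyp _ hH).2.2.1
    rcases h23 with h2 | h3
    · have := (valP2 _ h2).2.1; linarith
    · have := (valP3 _ h3).2.1; linarith
  -- finiteness
  have finP2 : P2.Finite := (Set.finite_Icc _ _).image _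
  have finP3 : P3.Finite := (Set.finite_Icc _ _).image _
  have finHyp : Hyp.Finite := (Set.finite_Icc _ _).image _
  -- cardinalities
  have cardP2 : (P2.ncard : ℤ) = M₂ + 1 := by
    have hinj : Function.Injective (fun e : ℤ => ((0 : ℤ), x * e)) := by
      intro e1 e2 h
      have := congrArg Prod.snd h
      exact mul_left_cancel₀ (ne_of_gt hx) this
    rw [hP2, Set.ncard_image_of_injective _ hinj, ncard_Icc_int]
    rw [Int.toNat_of_nonneg (by linarith)]
    ring
  have cardP3 : (P3.ncard : ℤ) = M₃ := by
    have hinj : Function.Injective (fun e : ℤ => (x * e, (0 : ℤ))) := by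
      intro e1 e2 h
      have := congrArg Prod.fst h
      exact mul_left_cancel₀ (ne_of_gt hx) this
    rw [hP3, Set.ncard_image_of_injective _ hinj, ncard_Icc_int]
    rw [Int.toNat_of_nonneg (by linarith)]
    ring
  have cardHyp : (Hyp.ncard : ℤ) = b * σ - M₂ - M₃ - 1 := by
    have hinj : Function.Injective
        (fun j : ℤ => (x * q * j - N, b * x * p * σ - N - x * p * j)) := by
      intro e1 e2 h
      have h1 := congrArg Prod.fst h
      simp only at h1
      have h2 : x * q * e1 = x * q * e2 := by linarith
      exact mul_left_cancel₀ (ne_of_gt hxq) h2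
    rw [hHyp, Set.ncard_image_of_injective _ hinj, ncard_Icc_int]
    rw [Int.toNat_of_nonneg (by linarith)]
    ring
  have hcard : (Bdry x p q N).ncard = P2.ncard + P3.ncard + Hyp.ncard := by
    rw [hsplit, Set.ncard_union_eq d23H (finP2.union finP3) finHyp,
      Set.ncard_union_eq d23 finP2 finP3]
  rw [hcard]
  push_cast
  linarith

end Stmt18

namespace Stmt18

lemma Dset_zero {x p q : ℤ} (hp : 0 < p) (hq : 0 < q) :
    Dset x p q 0 = {((0:ℤ), (0:ℤ))} := by
  ext ⟨a, d⟩
  simp only [Dset, Set.mem_setOf_eq, Set.mem_singleton_iff, Prod.mk.injEq]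
  constructor
  · rintro ⟨h1, h2, h3, -⟩
    have hpa : 0 ≤ p * a := mul_nonneg (le_of_lt hp) h1
    have hqd : 0 ≤ q * d := mul_nonneg (le_of_lt hq) h2
    have ea : p * a = 0 := le_antisymm (by linarith) hpa
    have ed : q * d = 0 := le_antisymm (by linarith) hqd
    exact ⟨(mul_eq_zero.mp ea).resolve_left (ne_of_gt hp),
      (mul_eq_zero.mp ed).resolve_left (ne_of_gt hq)⟩
  · rintro ⟨rfl, rfl⟩
    exact ⟨le_refl _, le_refl _, by norm_num, ⟨0, by ring⟩⟩

lemma Dset_step {x p q : ℤ} (hp : 0 < p) (hq : 0 < q) (σ : ℤ) :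
    Dset x p q ((σ + 1) * (p + q + 1)) =
      ((fun ad : ℤ × ℤ => (ad.1 + 1, ad.2 + 1)) '' Dset x p q (σ * (p + q + 1))) ∪
        Bdry x p q ((σ + 1) * (p + q + 1)) ∧
    Disjoint ((fun ad : ℤ × ℤ => (ad.1 + 1, ad.2 + 1)) '' Dset x p q (σ * (p + q + 1)))
      (Bdry x p q ((σ + 1) * (p + q + 1))) := by
  constructor
  · ext ⟨a, d⟩
    constructor
    · rintro ⟨h1, h2, h3, hdvd⟩
      simp only [Set.mem_setOf_eq] at h1 h2 h3
      by_cases hB : a = 0 ∨ d = 0 ∨ p * a + q * d = (σ + 1) * (p + q + 1)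
      · exact Or.inr ⟨⟨h1, h2, h3, hdvd⟩, hB⟩
      · push_neg at hB
        obtain ⟨hB1, hB2, hB3⟩ := hB
        left
        refine ⟨(a - 1, d - 1), ⟨?_, ?_, ?_, ?_⟩, by simp⟩
        · simp only; omega
        · simp only; omega
        · show p * (a - 1) + q * (d - 1) ≤ σ * (p + q + 1)
          have hlt : p * a + q * d < (σ + 1) * (p + q + 1) := lt_of_le_of_ne h3 hB3
          have hr : (σ + 1) * (p + q + 1) = σ * (p + q + 1) + (p + q + 1) := by ring
          linarith
        · show x ∣ (a - 1) - (d - 1)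
          have : (a - 1) - (d - 1) = a - d := by ring
          rw [this]; exact hdvd
    · rintro (⟨⟨a', d'⟩, ⟨h1, h2, h3, hdvd⟩, heq'⟩ | hB)
      · simp only [Set.mem_setOf_eq] at h1 h2 h3
        simp only [Prod.mk.injEq] at heq'
        obtain ⟨ha, hd⟩ := heq'
        subst ha; subst hd
        refine ⟨by simp only; omega, by simp only; omega, ?_, ?_⟩
        · show p * (a' + 1) + q * (d' + 1) ≤ (σ + 1) * (p + q + 1)
          nlinarith [h3]
        · show x ∣ (a' + 1) - (d' + 1)
          have : (a' + 1) - (d' + 1) = a' - d' := by ring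
          rw [this]; exact hdvd
      · exact Bdry_subset hB
  · rw [Set.disjoint_left]
    rintro ad ⟨⟨a', d'⟩, ⟨h1, h2, h3, -⟩, heq'⟩ ⟨-, hor⟩
    simp only [Set.mem_setOf_eq] at h1 h2 h3
    rw [← heq'] at hor
    simp only at hor
    rcases hor with h | h | h
    · omega
    · omega
    · nlinarith [h3, h]

lemma main_count {x p q b : ℤ} (hx : 0 < x) (hp : 0 < p) (hq : 0 < q) (hb : 0 < b)
    (heq : (p + q + 1) ^ 2 = b * x * p * q) :
    ∀ σ : ℤ, 0 ≤ σ →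
      2 * ((Dset x p q (σ * (p + q + 1))).ncard : ℤ) = 2 + b * σ * (σ + 1) := by
  refine fun σ hσ => Int.le_induction
    (motive := fun s _ => 2 * ((Dset x p q (s * (p + q + 1))).ncard : ℤ) = 2 + b * s * (s + 1))
    ?_ ?_ σ hσ
  · show 2 * ((Dset x p q (0 * (p + q + 1))).ncard : ℤ) = 2 + b * 0 * (0 + 1)
    rw [show (0:ℤ) * (p + q + 1) = 0 by ring, Dset_zero hp hq, Set.ncard_singleton]
    norm_num
  · intro n hn ih
    show 2 * ((Dset x p q ((n + 1) * (p + q + 1))).ncard : ℤ) = 2 + b * (n + 1) * (n + 1 + 1)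
    obtain ⟨hsplit, hdisj⟩ := Dset_step (x := x) hp hq n
    have hNpos : 1 ≤ (n + 1) * (p + q + 1) := by nlinarith
    set N : ℤ := (n + 1) * (p + q + 1) with hN
    have hxq : 0 < x * q := mul_pos hx hq
    have hxp : 0 < x * p := mul_pos hx hp
    have hbdry : ((Bdry x p q N).ncard : ℤ) = b * (n + 1) := by
      refine bdry_card (M₂ := (N-1)/(x*q)) (M₃ := (N-1)/(x*p)) hx hp hq hb heq (by linarith) hN ?_ ?_ ?_ ?_ ?_ ?_
      · have h1 := Int.mul_ediv_add_emod (N - 1) (x * q)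
        have h2 := Int.emod_nonneg (N - 1) (ne_of_gt hxq)
        linarith
      · have h1 := Int.mul_ediv_add_emod (N - 1) (x * q)
        have h2 := Int.emod_lt_of_pos (N - 1) hxq
        linarith
      · exact Int.ediv_nonneg (by linarith) (le_of_lt hxq)
      · have h1 := Int.mul_ediv_add_emod (N - 1) (x * p)
        have h2 := Int.emod_nonneg (N - 1) (ne_of_gt hxp)
        linarith
      · have h1 := Int.mul_ediv_add_emod (N - 1) (x * p)
        have h2 := Int.emod_lt_of_pos (N - 1) hxp
        linarith
      · exact Int.ediv_nonneg (by linarith) (le_of_lt hxp)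
    have hinj : Function.Injective (fun ad : ℤ × ℤ => (ad.1 + 1, ad.2 + 1)) := by
      intro u v h
      simp only [Prod.mk.injEq] at h
      exact Prod.ext (by omega) (by omega)
    have hfin : (Dset x p q (n * (p + q + 1))).Finite := Dset_finite hp hq
    have hfinB : (Bdry x p q N).Finite := (Dset_finite hp hq).subset Bdry_subset
    have hcard : (Dset x p q N).ncard =
        (Dset x p q (n * (p + q + 1))).ncard + (Bdry x p q N).ncard := by
      rw [hsplit, Set.ncard_union_eq hdisj (hfin.image _) hfinB,
        Set.ncard_image_of_injective _ hinj]
    rw [hcard]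
    push_cast
    linear_combination ih + 2 * hbdry

end Stmt18

namespace Stmt18

def Sset (x p q t : ℤ) : Set (ℤ × ℤ) :=
  {mn | x * p * mn.1 + (p + q) * mn.2 ≤ t ∧ -(x * mn.1) - mn.2 ≤ t ∧ -mn.2 ≤ t}

lemma Dset_eq_img {x : ℤ} (p q t : ℤ) (hx : x ≠ 0) :
    Dset x p q (t * (p + q + 1)) =
      (fun mn : ℤ × ℤ => (t + x * mn.1 + mn.2, t + mn.2)) '' Sset x p q t := by
  ext ⟨a, d⟩
  constructor
  · rintro ⟨h1, h2, h3, ⟨k, hk⟩⟩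
    simp only [Set.mem_setOf_eq] at h1 h2 h3 hk
    refine ⟨(k, d - t), ⟨?_, ?_, ?_⟩, ?_⟩
    · show x * p * k + (p + q) * (d - t) ≤ t
      have hxk : x * k = a - d := hk.symm
      have hexp : x * p * k + (p + q) * (d - t) = p * (x * k) + (p + q) * d - t * (p + q) := by ring
      rw [hexp, hxk]
      have h3' : p * a + q * d ≤ t * (p + q + 1) := h3
      have hr : t * (p + q + 1) = t * (p + q) + t := by ring
      linarith
    · show -(x * k) - (d - t) ≤ t
      rw [hk.symm] at *
      linarith [hk]
    · show -(d - t) ≤ t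
      linarith
    · show (t + x * k + (d - t), t + (d - t)) = (a, d)
      have : x * k = a - d := hk.symm
      rw [this]
      simp only [Prod.mk.injEq]
      constructor <;> ring
  · rintro ⟨⟨m, n⟩, ⟨h1, h2, h3⟩, heq2⟩
    simp only [Prod.mk.injEq] at heq2
    obtain ⟨ha, hd⟩ := heq2
    subst ha; subst hd
    simp only [Set.mem_setOf_eq] at h1 h2 h3
    refine ⟨?_, ?_, ?_, ⟨m, by dsimp only; ring⟩⟩
    · show (0:ℤ) ≤ t + x * m + n
      linarith
    · show (0:ℤ) ≤ t + n
      linarith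
    · show p * (t + x * m + n) + q * (t + n) ≤ t * (p + q + 1)
      have hexp : p * (t + x * m + n) + q * (t + n) =
          x * p * m + (p + q) * n + t * (p + q) := by ring
      have hr : t * (p + q + 1) = t * (p + q) + t := by ring
      linarith
lemma Sset_card {x p q b : ℤ} (hx : 0 < x) (hp : 0 < p) (hq : 0 < q) (hb : 0 < b)
    (heq : (p + q + 1) ^ 2 = b * x * p * q) (t : ℤ) (ht : 0 ≤ t) :
    2 * ((Sset x p q t).ncard : ℤ) = 2 + b * t * (t + 1) := by
  have hinj : Function.Injective (fun mn : ℤ × ℤ => (t + x * mn.1 + mn.2, t + mn.2)) := by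
    intro u v h
    simp only [Prod.mk.injEq] at h
    obtain ⟨h1, h2⟩ := h
    have hn : u.2 = v.2 := by linarith
    have hm : x * u.1 = x * v.1 := by linarith
    exact Prod.ext (mul_left_cancel₀ (ne_of_gt hx) hm) hn
  have := main_count hx hp hq hb heq t ht
  rwa [Dset_eq_img p q t (ne_of_gt hx), Set.ncard_image_of_injective _ hinj] at this

lemma Sset_finite {x p q t : ℤ} (hx : 0 < x) (hp : 0 < p) (hq : 0 < q) :
    (Sset x p q t).Finite := by
  have hinj : Set.InjOn (fun mn : ℤ × ℤ => (t + x * mn.1 + mn.2, t + mn.2)) (Sset x p q t) := by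
    intro u _ v _ h
    simp only [Prod.mk.injEq] at h
    obtain ⟨h1, h2⟩ := h
    have hn : u.2 = v.2 := by linarith
    have hm : x * u.1 = x * v.1 := by linarith
    exact Prod.ext (mul_left_cancel₀ (ne_of_gt hx) hm) hn
  exact Set.Finite.of_finite_image
    (by rw [← Dset_eq_img p q t (ne_of_gt hx)]; exact Dset_finite hp hq) hinj

lemma interior_halfplane (c d : ℝ) (hcd : 0 < c ^ 2 + d ^ 2) :
    interior {a : ℝ × ℝ | c * a.1 + d * a.2 ≤ 1} = {a | c * a.1 + d * a.2 < 1} := by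
  have hcont : Continuous fun a : ℝ × ℝ => c * a.1 + d * a.2 := by fun_prop
  apply Set.Subset.antisymm
  · intro v hv
    have hle : c * v.1 + d * v.2 ≤ 1 := by
      have := interior_subset hv
      simpa using this
    rcases lt_or_eq_of_le hle with h | h
    · exact h
    · exfalso
      obtain ⟨ε, hε, hball⟩ := Metric.isOpen_iff.mp isOpen_interior v hv
      set δ : ℝ := ε / (2 * (|c| + |d| + 1)) with hδdef
      have hden : 0 < 2 * (|c| + |d| + 1) := by positivity
      have hδ : 0 < δ := div_pos hε hden
      have hkey : δ * (|c| + |d| + 1) = ε / 2 := by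
        rw [hδdef]; field_simp
      have habsc : |δ * c| < ε := by
        rw [abs_mul, abs_of_pos hδ]
        have h1 : δ * |c| ≤ δ * (|c| + |d| + 1) :=
          mul_le_mul_of_nonneg_left (by linarith [abs_nonneg d]) (le_of_lt hδ)
        linarith
      have habsd : |δ * d| < ε := by
        rw [abs_mul, abs_of_pos hδ]
        have h1 : δ * |d| ≤ δ * (|c| + |d| + 1) :=
          mul_le_mul_of_nonneg_left (by linarith [abs_nonneg c]) (le_of_lt hδ)
        linarith
      have hdist : dist ((v.1 + δ * c, v.2 + δ * d) : ℝ × ℝ) v < ε := by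
        rw [Prod.dist_eq]
        apply max_lt
        · rw [Real.dist_eq]
          have he : v.1 + δ * c - v.1 = δ * c := by ring
          rw [show ((v.1 + δ * c, v.2 + δ * d) : ℝ × ℝ).1 = v.1 + δ * c from rfl, he]
          exact habsc
        · rw [Real.dist_eq]
          have he : v.2 + δ * d - v.2 = δ * d := by ring
          rw [show ((v.1 + δ * c, v.2 + δ * d) : ℝ × ℝ).2 = v.2 + δ * d from rfl, he]
          exact habsd
      have humem := hball (Metric.mem_ball.mpr hdist)
      have hle2 := interior_subset humem
      simp only [Set.mem_setOf_eq] at hle2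
      nlinarith [mul_pos hδ hcd]
  · refine interior_maximal ?_ (isOpen_lt hcont continuous_const)
    intro a ha
    have ha' : c * a.1 + d * a.2 < 1 := ha
    show c * a.1 + d * a.2 ≤ 1
    exact le_of_lt ha'

end Stmt18

open Stmt18 in
/-- let b, x, y, z be positive integers with
`(x + y + z)² = b·x·y·z`, `x ∣ y` and `x ∣ z`.  With
`u₁ = (y, (y+z)/x)`, `u₂ = (−x, −1)`, `u₃ = (0, −1)` and
`T = {a : ⟨u₁,a⟩ ≤ 1, ⟨u₂,a⟩ ≤ 1, ⟨u₃,a⟩ ≤ 1}`, the triangle `T` is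
pseudointegral, its only interior lattice point is the origin, and its boundary
contains exactly `b` lattice points. -/
theorem stmt_18 (b x y z : ℤ) (hb : 0 < b) (hx : 0 < x) (hy : 0 < y) (hz : 0 < z)
    (hsol : (x + y + z) ^ 2 = b * x * y * z) (hdy : x ∣ y) (hdz : x ∣ z)
    (T : Set (ℝ × ℝ))
    (hT : T = {a : ℝ × ℝ |
      (y : ℝ) * a.1 + (((y + z) / x : ℤ) : ℝ) * a.2 ≤ 1 ∧
      (-(x : ℝ)) * a.1 + (-1 : ℝ) * a.2 ≤ 1 ∧
      (0 : ℝ) * a.1 + (-1 : ℝ) * a.2 ≤ 1}) :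
    IsPIP T ∧ interior T ∩ latticePts = {((0 : ℝ), (0 : ℝ))} ∧
      ((frontier T ∩ latticePts).ncard : ℤ) = b := by
  obtain ⟨p, hyp⟩ := hdy
  obtain ⟨q, hzq⟩ := hdz
  have hp : 0 < p := by
    rcases mul_pos_iff.mp (hyp ▸ hy) with ⟨-, h⟩ | ⟨h, -⟩
    · exact h
    · linarith
  have hq : 0 < q := by
    rcases mul_pos_iff.mp (hzq ▸ hz) with ⟨-, h⟩ | ⟨h, -⟩
    · exact h
    · linarith
  have heqc : (p + q + 1) ^ 2 = b * x * p * q := by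
    have h2 : x ^ 2 * ((p + q + 1) ^ 2) = x ^ 2 * (b * x * p * q) := by
      rw [hyp, hzq] at hsol
      linear_combination hsol
    exact mul_left_cancel₀ (pow_ne_zero 2 (ne_of_gt hx)) h2
  have hwq : (y + z) / x = p + q := by
    rw [hyp, hzq, ← mul_add, Int.mul_ediv_cancel_left _ (ne_of_gt hx)]
  rw [hwq] at hT
  have hembinj : Function.Injective (fun mn : ℤ × ℤ => ((mn.1 : ℝ), (mn.2 : ℝ))) := by
    intro u v h
    simp only [Prod.mk.injEq] at h
    exact Prod.ext (by exact_mod_cast h.1) (by exact_mod_cast h.2)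
  -- lattice points of the dilates
  have hlat : ∀ t : ℤ, 0 < t → (((t : ℝ)) • T ∩ latticePts) =
      (fun mn : ℤ × ℤ => ((mn.1 : ℝ), (mn.2 : ℝ))) '' Sset x p q t := by
    intro t ht
    have htR : (0 : ℝ) < (t : ℝ) := by exact_mod_cast ht
    ext v
    constructor
    · rintro ⟨hsm, m, n, rfl⟩
      rw [Set.mem_smul_set] at hsm
      obtain ⟨u, huT, husm⟩ := hsm
      rw [hT] at huT
      obtain ⟨c1, c2, c3⟩ := huT
      have hu1 : (t : ℝ) * u.1 = (m : ℝ) := by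
        have := congrArg Prod.fst husm
        simpa [smul_eq_mul] using this
      have hu2 : (t : ℝ) * u.2 = (n : ℝ) := by
        have := congrArg Prod.snd husm
        simpa [smul_eq_mul] using this
      have d1 : (y : ℝ) * (m : ℝ) + ((p + q : ℤ) : ℝ) * (n : ℝ) ≤ (t : ℝ) := by
        have hm := mul_le_mul_of_nonneg_left c1 (le_of_lt htR)
        calc (y : ℝ) * (m : ℝ) + ((p + q : ℤ) : ℝ) * (n : ℝ)
            = (t : ℝ) * ((y : ℝ) * u.1 + ((p + q : ℤ) : ℝ) * u.2) := by
              rw [← hu1, ← hu2]; ring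
          _ ≤ (t : ℝ) * 1 := hm
          _ = (t : ℝ) := by ring
      have d2 : (-(x : ℝ)) * (m : ℝ) + (-1 : ℝ) * (n : ℝ) ≤ (t : ℝ) := by
        have hm := mul_le_mul_of_nonneg_left c2 (le_of_lt htR)
        calc (-(x : ℝ)) * (m : ℝ) + (-1 : ℝ) * (n : ℝ)
            = (t : ℝ) * ((-(x : ℝ)) * u.1 + (-1 : ℝ) * u.2) := by
              rw [← hu1, ← hu2]; ring
          _ ≤ (t : ℝ) * 1 := hm
          _ = (t : ℝ) := by ring
      have d3 : (-1 : ℝ) * (n : ℝ) ≤ (t : ℝ) := by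
        have hm := mul_le_mul_of_nonneg_left c3 (le_of_lt htR)
        calc (-1 : ℝ) * (n : ℝ) = (t : ℝ) * ((0 : ℝ) * u.1 + (-1 : ℝ) * u.2) := by
              rw [← hu2]; ring
          _ ≤ (t : ℝ) * 1 := hm
          _ = (t : ℝ) := by ring
      refine ⟨(m, n), ⟨?_, ?_, ?_⟩, rfl⟩
      · show x * p * m + (p + q) * n ≤ t
        have : y * m + (p + q) * n ≤ t := by exact_mod_cast d1
        rw [hyp] at this
        linarith
      · show -(x * m) - n ≤ t
        have : -x * m + (-1) * n ≤ t := by exact_mod_cast d2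
        linarith
      · show -n ≤ t
        have : (-1) * n ≤ t := by exact_mod_cast d3
        linarith
    · rintro ⟨⟨m, n⟩, ⟨h1, h2, h3⟩, hveq⟩
      simp only [Set.mem_setOf_eq] at h1 h2 h3
      rw [← hveq]
      constructor
      · rw [Set.mem_smul_set]
        refine ⟨((m : ℝ) / t, (n : ℝ) / t), ?_, ?_⟩
        · rw [hT]
          refine ⟨?_, ?_, ?_⟩
          · show (y : ℝ) * ((m : ℝ) / t) + ((p + q : ℤ) : ℝ) * ((n : ℝ) / t) ≤ 1
            have hrw : (y : ℝ) * ((m : ℝ) / t) + ((p + q : ℤ) : ℝ) * ((n : ℝ) / t) =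
                ((y : ℝ) * m + ((p + q : ℤ) : ℝ) * n) / t := by ring
            rw [hrw, div_le_one htR]
            have : y * m + (p + q) * n ≤ t := by rw [hyp]; linarith
            exact_mod_cast this
          · show (-(x : ℝ)) * ((m : ℝ) / t) + (-1 : ℝ) * ((n : ℝ) / t) ≤ 1
            have hrw : (-(x : ℝ)) * ((m : ℝ) / t) + (-1 : ℝ) * ((n : ℝ) / t) =
                ((-(x : ℝ)) * m + (-1 : ℝ) * n) / t := by ring
            rw [hrw, div_le_one htR]
            have : -x * m + (-1) * n ≤ t := by linarith
            exact_mod_cast this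
          · show (0 : ℝ) * ((m : ℝ) / t) + (-1 : ℝ) * ((n : ℝ) / t) ≤ 1
            have hrw : (0 : ℝ) * ((m : ℝ) / t) + (-1 : ℝ) * ((n : ℝ) / t) =
                ((0 : ℝ) * m + (-1 : ℝ) * n) / t := by ring
            rw [hrw, div_le_one htR]
            have : 0 * m + (-1) * n ≤ t := by linarith
            exact_mod_cast this
        · show (t : ℝ) • (((m : ℝ) / t, (n : ℝ) / t) : ℝ × ℝ) = _
          have e1 : (t : ℝ) * ((m : ℝ) / t) = (m : ℝ) := by field_simp
          have e2 : (t : ℝ) * ((n : ℝ) / t) = (n : ℝ) := by field_simp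
          simp only [Prod.smul_mk, smul_eq_mul, e1, e2]
      · exact ⟨m, n, rfl⟩
  -- Ehrhart values
  have hehr : ∀ t : ℕ, 0 < t → 2 * ((ehr T t : ℤ)) = 2 + b * t * (t + 1) := by
    intro t ht
    have htZ : (0 : ℤ) < (t : ℤ) := by exact_mod_cast ht
    have h1 := hlat (t : ℤ) htZ
    rw [show (((t : ℤ) : ℝ)) = ((t : ℕ) : ℝ) by push_cast; ring] at h1
    have h2 : ehr T t = (Sset x p q t).ncard := by
      show (((t : ℕ) : ℝ) • T ∩ latticePts).ncard = _
      rw [h1, Set.ncard_image_of_injective _ hembinj]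
    rw [h2]
    have := Sset_card hx hp hq hb heqc (t : ℤ) (le_of_lt htZ)
    linarith
  -- the interior
  have hY2 : (0 : ℝ) < (y : ℝ) ^ 2 + ((p + q : ℤ) : ℝ) ^ 2 := by
    have h0 : (0 : ℝ) < (y : ℝ) := by exact_mod_cast hy
    nlinarith [sq_nonneg (((p + q : ℤ) : ℝ))]
  have hX2 : (0 : ℝ) < (-(x : ℝ)) ^ 2 + (-1 : ℝ) ^ 2 := by
    nlinarith [sq_nonneg ((x : ℝ))]
  have h02 : (0 : ℝ) < (0 : ℝ) ^ 2 + (-1 : ℝ) ^ 2 := by norm_num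
  have hintT : interior T = {a : ℝ × ℝ | (y : ℝ) * a.1 + ((p + q : ℤ) : ℝ) * a.2 < 1} ∩
      ({a : ℝ × ℝ | (-(x : ℝ)) * a.1 + (-1 : ℝ) * a.2 < 1} ∩
        {a : ℝ × ℝ | (0 : ℝ) * a.1 + (-1 : ℝ) * a.2 < 1}) := by
    rw [hT]
    simp only [Set.setOf_and]
    rw [interior_inter, interior_inter, interior_halfplane _ _ hY2,
      interior_halfplane _ _ hX2, interior_halfplane _ _ h02]
  have hintL : interior T ∩ latticePts = {((0 : ℝ), (0 : ℝ))} := by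
    ext v
    constructor
    · rintro ⟨hvi, m, n, rfl⟩
      rw [hintT] at hvi
      obtain ⟨s1, s2, s3⟩ := hvi
      simp only [Set.mem_setOf_eq] at s1 s2 s3
      have i1 : y * m + (p + q) * n ≤ 0 := by
        have : y * m + (p + q) * n < 1 := by exact_mod_cast s1
        linarith
      have i2 : -x * m + (-1) * n ≤ 0 := by
        have : -x * m + (-1) * n < 1 := by exact_mod_cast s2
        linarith
      have i3 : -n ≤ 0 := by
        have : (0 : ℤ) * m + (-1) * n < 1 := by exact_mod_cast s3
        linarith
      have key : p * (x * m + n) + q * n ≤ 0 := by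
        have hr : p * (x * m + n) + q * n = y * m + (p + q) * n := by rw [hyp]; ring
        linarith
      have t1 : 0 ≤ p * (x * m + n) := mul_nonneg (le_of_lt hp) (by linarith)
      have t2 : 0 ≤ q * n := mul_nonneg (le_of_lt hq) (by linarith)
      have hqn : q * n = 0 := le_antisymm (by linarith) t2
      have hn0 : n = 0 := (mul_eq_zero.mp hqn).resolve_left (ne_of_gt hq)
      have hpxmn : p * (x * m + n) = 0 := le_antisymm (by linarith) t1
      have hxmn : x * m + n = 0 := (mul_eq_zero.mp hpxmn).resolve_left (ne_of_gt hp)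
      have hxm : x * m = 0 := by omega
      have hm0 : m = 0 := (mul_eq_zero.mp hxm).resolve_left (ne_of_gt hx)
      rw [hm0, hn0]
      norm_num
    · rintro hveq
      rw [Set.mem_singleton_iff] at hveq
      subst hveq
      refine ⟨?_, 0, 0, by norm_num⟩
      rw [hintT]
      refine ⟨?_, ?_, ?_⟩ <;> · show _ < (1:ℝ); norm_num
  refine ⟨?_, hintL, ?_⟩
  · -- IsPIP
    refine ⟨Polynomial.C 1 + Polynomial.C ((b : ℚ) / 2) * (Polynomial.X + Polynomial.X ^ 2), ?_⟩
    intro t ht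
    have h2 := hehr t ht
    have hQ : 2 * ((ehr T t : ℚ)) = 2 + (b : ℚ) * t * (t + 1) := by exact_mod_cast h2
    simp only [Polynomial.eval_add, Polynomial.eval_mul, Polynomial.eval_pow,
      Polynomial.eval_C, Polynomial.eval_X]
    linear_combination hQ / 2
  · -- frontier count
    have hclosed : IsClosed T := by
      rw [hT]
      simp only [Set.setOf_and]
      exact ((isClosed_le (by fun_prop) continuous_const).inter
        ((isClosed_le (by fun_prop) continuous_const).inter
          (isClosed_le (by fun_prop) continuous_const)))
    have hTL : T ∩ latticePts =
        (fun mn : ℤ × ℤ => ((mn.1 : ℝ), (mn.2 : ℝ))) '' Sset x p q 1 := by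
      have h1 := hlat 1 one_pos
      rw [show (((1 : ℤ)) : ℝ) = (1 : ℝ) by norm_num, one_smul] at h1
      exact h1
    have hfinTL : (T ∩ latticePts).Finite := by
      rw [hTL]; exact (Sset_finite hx hp hq).image _
    have hTLcard : ((T ∩ latticePts).ncard : ℤ) = b + 1 := by
      have hc := Sset_card hx hp hq hb heqc 1 (by norm_num)
      rw [hTL, Set.ncard_image_of_injective _ hembinj]
      linarith
    have hsetid : frontier T ∩ latticePts = (T ∩ latticePts) \ (interior T ∩ latticePts) := by
      rw [hclosed.frontier_eq]
      ext v
      simp only [Set.mem_inter_iff, Set.mem_diff]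
      tauto
    have hsub : interior T ∩ latticePts ⊆ T ∩ latticePts :=
      Set.inter_subset_inter_left _ interior_subset
    rw [hsetid, Set.ncard_diff hsub (hfinTL.subset hsub)]
    have hone : (interior T ∩ latticePts).ncard = 1 := by
      rw [hintL]; exact Set.ncard_singleton _
    rw [hone]
    omega
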